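/- For the monoid S = {f_{p,q}(x) = px + q mod 1 : p ∈ ℚ ∩ (0,1], q ∈ ℚ ∩ [0,1]} acting on the circle 𝕋¹, every point x ∈ 𝕋¹ is almost periodic in the modified sense: for every open U ∋ x with A = {f ∈ S : f(x) ∈ U}, there exists a finite K ⊆ S such that (K∘s) ∩ A ≠ ∅ for all s ∈ S. -/

import Mathlib

/-- The map `f_{p,q}(x) = p x + q (mod 1)` on the circle `𝕋¹ = ℝ/ℤ`, computed
via the representative of `x` in `[0,1)`. -/
noncomputable def circleAffine (p q : ℚ) (x : UnitAddCircle) : UnitAddCircle :=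
  (((p : ℝ) * ((AddCircle.equivIco 1 0 x : ℝ)) + (q : ℝ) : ℝ) : UnitAddCircle)

/-- The monoid `S = {f_{p,q} : p ∈ ℚ ∩ (0,1], q ∈ ℚ ∩ [0,1]}` as a set of
self-maps of the circle. -/
noncomputable def circleMonoid : Set (UnitAddCircle → UnitAddCircle) :=
  {g | ∃ p q : ℚ, p ∈ Set.Ioc (0 : ℚ) 1 ∧ q ∈ Set.Icc (0 : ℚ) 1 ∧ g = circleAffine p q}

lemma coe_rep (z : UnitAddCircle) : (((AddCircle.equivIco 1 0 z : ℝ)) : UnitAddCircle) = z :=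
  (AddCircle.equivIco 1 0).symm_apply_apply z

lemma rep_mem (z : UnitAddCircle) : (AddCircle.equivIco 1 0 z : ℝ) ∈ Set.Ico (0:ℝ) 1 := by
  simpa using (AddCircle.equivIco 1 0 z).2

lemma coe_int_zero (n : ℤ) : ((n : ℝ) : UnitAddCircle) = 0 := by
  rw [AddCircle.coe_eq_zero_iff]
  exact ⟨n, by simp⟩

lemma coe_eq_of_int_diff {a b : ℝ} (n : ℤ) (h : a - b = n) :
    ((a : UnitAddCircle)) = b := by
  have : a = b + n := by linarith [h]
  rw [this, AddCircle.coe_add, coe_int_zero, add_zero]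

lemma rot_apply (q' : ℚ) (z : UnitAddCircle) :
    circleAffine 1 q' z = z + ((q' : ℝ) : UnitAddCircle) := by
  unfold circleAffine
  rw [Rat.cast_one, one_mul, AddCircle.coe_add, coe_rep]

lemma comp_rot (q' p q : ℚ) :
    circleAffine 1 q' ∘ circleAffine p q = circleAffine p (Int.fract (q + q')) := by
  funext y
  rw [Function.comp_apply, rot_apply]
  unfold circleAffine
  rw [← AddCircle.coe_add]
  apply coe_eq_of_int_diff (⌊q + q'⌋ : ℤ)
  have h : ((Int.fract (q + q') : ℚ) : ℝ) = (q:ℝ) + q' - (⌊q + q'⌋ : ℤ) := by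
    rw [Int.fract]; push_cast; ring
  rw [h]; ring

/-- Every point of the circle is almost periodic in the modified sense for the
semiflow `(𝕋¹, S)`: for every open `U ∋ x`, with `A = {f ∈ S : f(x) ∈ U}`,
there is a finite `K ⊆ S` with `(K ∘ s) ∩ A ≠ ∅` for all `s ∈ S`. -/
theorem stmt16 (x : UnitAddCircle) (U : Set UnitAddCircle)
    (hU : IsOpen U) (hx : x ∈ U) :
    ∃ K : Set (UnitAddCircle → UnitAddCircle), K.Finite ∧ K ⊆ circleMonoid ∧
      ∀ s ∈ circleMonoid, ∃ k ∈ K, (k ∘ s) ∈ circleMonoid ∧ (k ∘ s) x ∈ U := by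
  obtain ⟨ε, hε, hball⟩ := Metric.isOpen_iff.mp hU x hx
  obtain ⟨n, hn⟩ := exists_nat_one_div_lt hε
  set N : ℕ := n + 2 with hN
  have hNpos : (0:ℝ) < N := by positivity
  have hNε : 1 / (N:ℝ) < ε := by
    refine lt_of_le_of_lt ?_ hn
    apply one_div_le_one_div_of_le
    · positivity
    · push_cast [hN]; linarith
  have hNhalf : 1 / (N:ℝ) ≤ 1 / 2 := by
    apply one_div_le_one_div_of_le
    · norm_num
    · push_cast [hN]; linarith
  refine ⟨(fun j : Fin N => circleAffine 1 ((j:ℚ) / N)) '' Set.univ, (Set.finite_univ).image _, ?_, ?_⟩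
  · rintro k ⟨j, -, rfl⟩
    refine ⟨1, (j:ℚ)/N, by norm_num, ⟨by positivity, ?_⟩, rfl⟩
    rw [div_le_one (by positivity)]
    exact_mod_cast (j.2.le)
  · rintro s ⟨p, q, hp, hq, rfl⟩
    set z : UnitAddCircle := circleAffine p q x with hz
    set t : ℝ := (AddCircle.equivIco 1 0 (x - z) : ℝ) with ht
    have htm := rep_mem (x - z)
    have ht0 : 0 ≤ t := htm.1
    have ht1 : t < 1 := htm.2
    set j : ℕ := ⌊(N:ℝ) * t⌋.toNat with hj
    have hjN : j < N := by
      have h1 : (N:ℝ) * t < N := by nlinarith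
      have h2 : ⌊(N:ℝ) * t⌋ < (N:ℤ) := by
        rw [Int.floor_lt]; exact_mod_cast h1
      omega
    set q' : ℚ := (j:ℚ) / N with hq'
    have hq'01 : q' ∈ Set.Icc (0:ℚ) 1 := by
      constructor
      · positivity
      · rw [hq', div_le_one (by positivity)]; exact_mod_cast hjN.le
    have hjt : |((q':ℝ)) - t| < 1 / N := by
      have hfl : (0:ℤ) ≤ ⌊(N:ℝ) * t⌋ := Int.floor_nonneg.mpr (mul_nonneg hNpos.le ht0)
      have hjr : (j:ℝ) = ((⌊(N:ℝ) * t⌋ : ℤ) : ℝ) := by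
        rw [hj]; exact_mod_cast congrArg (fun m : ℤ => (m : ℝ)) (Int.toNat_of_nonneg hfl)
      have hjle : ((j:ℝ)) ≤ (N:ℝ) * t := by rw [hjr]; exact Int.floor_le _
      have hjgt : (N:ℝ) * t - 1 < (j:ℝ) := by
        rw [hjr]; linarith [Int.lt_floor_add_one ((N:ℝ) * t)]
      have hq'r : (q' : ℝ) = (j:ℝ) / N := by push_cast [hq']; ring
      rw [hq'r, abs_lt]
      constructor
      · rw [div_sub' hNpos.ne', neg_lt, ← neg_div, div_lt_div_iff₀ hNpos hNpos]
        nlinarith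
      · rw [div_sub' hNpos.ne', div_lt_div_iff₀ hNpos hNpos]
        nlinarith
    refine ⟨circleAffine 1 q', ⟨⟨j, hjN⟩, Set.mem_univ _, rfl⟩, ?_, ?_⟩
    · rw [comp_rot]
      exact ⟨p, Int.fract (q + q'), hp,
        ⟨Int.fract_nonneg _, (Int.fract_lt_one _).le⟩, rfl⟩
    · apply hball
      have hxz : ((t : ℝ) : UnitAddCircle) = x - z := coe_rep (x - z)
      have : (circleAffine 1 q' ∘ circleAffine p q) x = z + ((q':ℝ) : UnitAddCircle) := by
        rw [Function.comp_apply, ← hz, rot_apply]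
      rw [Metric.mem_ball, this, dist_eq_norm]
      have : z + ((q':ℝ) : UnitAddCircle) - x = (((q':ℝ) - t : ℝ) : UnitAddCircle) := by
        rw [AddCircle.coe_sub, hxz]; abel
      rw [this]
      have hnorm : ‖((((q':ℝ) - t : ℝ)) : UnitAddCircle)‖ = |(q':ℝ) - t| := by
        rw [AddCircle.norm_coe_eq_abs_iff (p := 1) one_ne_zero]
        rw [abs_one]
        linarith
      rw [hnorm]
      linarith
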